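/- Let n ∈ ω and let T^0, …, T^n be trees of height ω₁ all of whose levels are countable, and let P = T^0 × ⋯ × T^n be their product, ordered coordinatewise by the tree orders, where two tuples are compatible iff they have a common coordinatewise upper bound. For α < ω₁ let P↾α be the set of tuples all of whose coordinates have tree-level below α. If A ⊆ P is a maximal antichain of P, then the set {α < ω₁ : A ∩ P↾α is a maximal antichain of P↾α} contains a closed unbounded subset of ω₁. -/

import Mathlib

noncomputable section

/-- The first uncountable ordinal `ω₁`. -/
def omega1 : Ordinal.{0} := (Cardinal.aleph 1).ord

/-- A club (closed unbounded) subset of `ω₁`. -/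
def IsClubOmega1 (C : Set Ordinal) : Prop :=
  C ⊆ Set.Iio omega1 ∧
  (∀ β < omega1, ∃ γ ∈ C, β ≤ γ) ∧
  (∀ α < omega1, Order.IsSuccLimit α → (∀ β < α, ∃ γ ∈ C, β ≤ γ ∧ γ < α) → α ∈ C)

/-- A stationary subset of `ω₁`: one meeting every club. -/
def IsStationaryIn (S : Set Ordinal) : Prop :=
  S ⊆ Set.Iio omega1 ∧ ∀ C : Set Ordinal, IsClubOmega1 C → (S ∩ C).Nonempty

/-- The diamond principle `♦`. -/
def DiamondPrinciple : Prop :=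
  ∃ a : Ordinal → Set Ordinal,
    (∀ α, α < omega1 → a α ⊆ Set.Iio α) ∧
    ∀ A : Set Ordinal, A ⊆ Set.Iio omega1 →
      IsStationaryIn {α | α < omega1 ∧ A ∩ Set.Iio α = a α}

open Classical in
/-- The level of a node of a tree: the order type of its set of strict
predecessors (defaulting to `0` when that set is not well-ordered). -/
noncomputable def levelOf {β : Type} [Preorder β] (x : β) : Ordinal :=
  if h : IsWellOrder {y : β // y < x} (· < ·) then
    @Ordinal.type {y : β // y < x} (· < ·) h
  else 0

/-- A tree order: the strict predecessors of every node are well-ordered. -/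
def IsTreeOrder (β : Type) [Preorder β] : Prop :=
  ∀ x : β, IsWellOrder {y : β // y < x} (· < ·)

/-- The height of a tree: the supremum of the successors of the levels of its nodes. -/
noncomputable def heightOf (β : Type) [Preorder β] : Ordinal :=
  ⨆ x : β, (levelOf x + 1)

/-- A Suslin tree: a tree of height `ω₁` all of whose chains and antichains
(in the tree sense: sets of pairwise incomparable nodes) are countable. -/
def IsSuslinTree (β : Type) [PartialOrder β] : Prop :=
  IsTreeOrder β ∧ heightOf β = omega1 ∧
  (∀ C : Set β, IsChain (· ≤ ·) C → C.Countable) ∧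
  (∀ A : Set β, (A.Pairwise fun x y => ¬ x ≤ y ∧ ¬ y ≤ x) → A.Countable)

/-- Compatibility (forcing sense): a common lower bound exists. -/
def Compat {P : Type*} [Preorder P] (p q : P) : Prop := ∃ r, r ≤ p ∧ r ≤ q

/-- The countable chain condition: every set of pairwise incompatible elements is countable. -/
def CCC (P : Type*) [Preorder P] : Prop :=
  ∀ A : Set P, (A.Pairwise fun p q => ¬ Compat p q) → A.Countable

/-- Compatibility in the upward sense: a common upper bound exists. -/
def UpCompat {P : Type*} [Preorder P] (p q : P) : Prop := ∃ r, p ≤ r ∧ q ≤ r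

/-- The countable chain condition with compatibility read as the existence of
common upper bounds. -/
def CCCUp (P : Type*) [Preorder P] : Prop :=
  ∀ A : Set P, (A.Pairwise fun p q => ¬ UpCompat p q) → A.Countable

/-- The Knaster property. -/
def Knaster (P : Type*) [Preorder P] : Prop :=
  ∀ A : Set P, ¬ A.Countable → ∃ B ⊆ A, ¬ B.Countable ∧ B.Pairwise Compat

/-- A bundled partial order. -/
structure PoCarrier : Type 1 where
  carrier : Type
  po : PartialOrder carrier

attribute [instance] PoCarrier.po

/-- `A` is a maximal antichain of the subset `S` of `P` (with compatibility
read as the existence of a common coordinatewise upper bound): `A ⊆ S`, the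
elements of `A` are pairwise incompatible, and every element of `S` is
compatible with some element of `A`. -/
def MaxUpAntichainIn (P : Type*) [Preorder P] (S A : Set P) : Prop :=
  A ⊆ S ∧ (A.Pairwise fun p q => ¬ UpCompat p q) ∧ ∀ p ∈ S, ∃ a ∈ A, UpCompat p a

lemma countable_Iio_of_lt_omega1' {α : Ordinal} (h : α < omega1) :
    (Set.Iio α).Countable := by
  rw [Cardinal.countable_iff_lt_aleph_one, Ordinal.mk_Iio_ordinal, Cardinal.lift_lt_aleph_one]
  exact Cardinal.lt_ord.1 h

lemma omega1_isLimit' : Order.IsSuccLimit omega1 :=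
  Cardinal.isSuccLimit_ord (Cardinal.aleph0_le_aleph 1)

lemma Ordinal_iSup_sequence_lt_omega1 {ι : Type} [Countable ι] (f : ι → Ordinal.{0})
    (h : ∀ i, f i < omega1) : ⨆ i, f i < omega1 := by
  have e : omega1 = Ordinal.omega 1 := by simp [omega1, Cardinal.ord_aleph]
  rw [e] at h ⊢
  exact Ordinal.iSup_lt_omega_one h

lemma lt_add_one_ordinal (a : Ordinal) : a < a + 1 := by
  rw [Ordinal.add_one_eq_succ]; exact Order.lt_succ a

/-- Let `T⁰, …, Tⁿ` be trees of height `ω₁` with countable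
levels and let `P = T⁰ × ⋯ × Tⁿ` be their coordinatewise product, tuples being
compatible iff they have a common coordinatewise upper bound.  For `α < ω₁`
let `P↾α` be the tuples all of whose coordinates have level below `α`.  If `A`
is a maximal antichain of `P`, then the set of `α < ω₁` such that `A ∩ P↾α` is
a maximal antichain of `P↾α` contains a club of `ω₁`. -/
theorem maximal_antichain_reflects_on_club (n : ℕ) (T : Fin (n + 1) → PoCarrier)
    (htree : ∀ i, IsTreeOrder (T i).carrier)
    (hlev : ∀ i, ∀ x : (T i).carrier, levelOf x < omega1)
    (hcnt : ∀ i, ∀ β : Ordinal, {x : (T i).carrier | levelOf x = β}.Countable)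
    (hcof : ∀ i, ∀ β < omega1, ∃ γ, β ≤ γ ∧ γ < omega1 ∧
      {x : (T i).carrier | levelOf x = γ}.Nonempty)
    (A : Set ((i : Fin (n + 1)) → (T i).carrier))
    (hA : MaxUpAntichainIn ((i : Fin (n + 1)) → (T i).carrier) Set.univ A) :
    ∃ C : Set Ordinal, IsClubOmega1 C ∧
      ∀ α ∈ C, MaxUpAntichainIn ((i : Fin (n + 1)) → (T i).carrier)
        {p | ∀ i, levelOf (p i) < α}
        (A ∩ {p | ∀ i, levelOf (p i) < α}) := by
  classical
  choose aF hAmem hAcompat using fun p : (i : Fin (n + 1)) → (T i).carrier =>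
    hA.2.2 p (Set.mem_univ p)
  -- the restriction `P↾α` is countable for `α < ω₁`
  have hres : ∀ α < omega1,
      {p : (i : Fin (n + 1)) → (T i).carrier | ∀ i, levelOf (p i) < α}.Countable := by
    intro α hα
    have h1 : ∀ i, {x : (T i).carrier | levelOf x < α}.Countable := by
      intro i
      have he : {x : (T i).carrier | levelOf x < α}
          = ⋃ β ∈ Set.Iio α, {x : (T i).carrier | levelOf x = β} := by
        ext x
        simp only [Set.mem_setOf_eq, Set.mem_iUnion, Set.mem_Iio, exists_prop]
        exact ⟨fun h => ⟨levelOf x, h, rfl⟩, fun ⟨β, hβ, hx⟩ => hx ▸ hβ⟩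
      rw [he]
      exact Set.Countable.biUnion (countable_Iio_of_lt_omega1' hα) fun β _ => hcnt i β
    exact Set.countable_pi h1
  -- key: a countable bound on where witnesses of compatibility can be found
  have key : ∀ α : Ordinal, α < omega1 → ∃ γ, γ < omega1 ∧
      ∀ p : (i : Fin (n + 1)) → (T i).carrier, (∀ i, levelOf (p i) < α) →
        ∃ a ∈ A, (∀ i, levelOf (a i) < γ) ∧ UpCompat p a := by
    intro α hα
    have hS := hres α hα
    haveI : Countable ↥{p : (i : Fin (n + 1)) → (T i).carrier | ∀ i, levelOf (p i) < α} :=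
      hS.to_subtype
    refine ⟨⨆ p : {p : (i : Fin (n + 1)) → (T i).carrier | ∀ i, levelOf (p i) < α},
      ((Finset.univ.sup fun i => levelOf (aF p.1 i)) + 1), ?_, ?_⟩
    · apply Ordinal_iSup_sequence_lt_omega1
      intro p
      have h1 : (Finset.univ.sup fun i => levelOf (aF p.1 i)) < omega1 := by
        refine (Finset.sup_lt_iff ?_).2 fun i _ => hlev i _
        exact omega1_isLimit'.pos
      have := omega1_isLimit'.succ_lt h1
      rwa [← Ordinal.add_one_eq_succ] at this
    · intro p hp
      refine ⟨aF p, hAmem p, fun i => ?_, hAcompat p⟩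
      have h1 : levelOf (aF p i) ≤ Finset.univ.sup fun j => levelOf (aF p j) :=
        Finset.le_sup (f := fun j => levelOf (aF p j)) (Finset.mem_univ i)
      have h2 : (Finset.univ.sup fun j => levelOf (aF p j)) + 1 ≤
          ⨆ q : {q : (i : Fin (n + 1)) → (T i).carrier | ∀ i, levelOf (q i) < α},
            ((Finset.univ.sup fun i => levelOf (aF q.1 i)) + 1) :=
        Ordinal.le_iSup (fun q : {q : (i : Fin (n + 1)) → (T i).carrier | ∀ i, levelOf (q i) < α} =>
          ((Finset.univ.sup fun i => levelOf (aF q.1 i)) + 1)) ⟨p, hp⟩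
      exact lt_of_le_of_lt h1 (lt_of_lt_of_le (lt_add_one_ordinal _) h2)
  -- a total choice of such bounds
  let g : Ordinal → Ordinal := fun α => if h : α < omega1 then (key α h).choose else 0
  have hg1 : ∀ α, g α < omega1 := by
    intro α
    by_cases h : α < omega1
    · simp only [g, dif_pos h]; exact (key α h).choose_spec.1
    · simp only [g, dif_neg h]
      exact omega1_isLimit'.pos
  have hg2 : ∀ α (h : α < omega1),
      ∀ p : (i : Fin (n + 1)) → (T i).carrier, (∀ i, levelOf (p i) < α) →
        ∃ a ∈ A, (∀ i, levelOf (a i) < g α) ∧ UpCompat p a := by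
    intro α h
    simpa only [g, dif_pos h] using (key α h).choose_spec.2
  -- the bounding function `B` for closure points
  let B : Ordinal → Ordinal := fun δ =>
    ⨆ x : δ.ToType, (g (((Ordinal.ToType.mk (o := δ)).symm x).1) + 1)
  have hB1 : ∀ δ < omega1, B δ < omega1 := by
    intro δ hδ
    haveI : Countable δ.ToType := by
      rw [← Cardinal.mk_le_aleph0_iff, Cardinal.mk_toType]
      have := Cardinal.lt_ord.1 hδ
      rwa [← Cardinal.succ_aleph0, Order.lt_succ_iff] at this
    refine Ordinal_iSup_sequence_lt_omega1
      (fun x : δ.ToType => g (((Ordinal.ToType.mk (o := δ)).symm x).1) + 1) fun x => ?_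
    have := omega1_isLimit'.succ_lt (hg1 (((Ordinal.ToType.mk (o := δ)).symm x).1))
    rwa [← Ordinal.add_one_eq_succ] at this
  have hB2 : ∀ γ δ : Ordinal, γ < δ → g γ < B δ := by
    intro γ δ hγδ
    have h2 := Ordinal.le_iSup
      (fun x : δ.ToType => g (((Ordinal.ToType.mk (o := δ)).symm x).1) + 1)
      ((Ordinal.ToType.mk (o := δ)) ⟨γ, hγδ⟩)
    rw [OrderIso.symm_apply_apply] at h2
    exact lt_of_lt_of_le (lt_add_one_ordinal _) h2
  -- the club
  refine ⟨{α | α < omega1 ∧ Order.IsSuccLimit α ∧ ∀ β < α, g β < α}, ⟨?_, ?_, ?_⟩, ?_⟩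
  · intro α hα; exact hα.1
  · -- unboundedness
    intro β hβ
    -- iterate `δ ↦ max (δ + 1) (B δ)`
    let s : ℕ → Ordinal := fun k => Nat.rec β (fun _ δ => max (δ + 1) (B δ)) k
    have hsω : ∀ k, s k < omega1 := by
      intro k
      induction k with
      | zero => exact hβ
      | succ k ih =>
        refine max_lt ?_ (hB1 _ ih)
        have := omega1_isLimit'.succ_lt ih
        rwa [← Ordinal.add_one_eq_succ] at this
    have hsmono : ∀ k, s k < s (k + 1) := by
      intro k
      exact lt_of_lt_of_le (lt_add_one_ordinal _) (le_max_left _ _)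
    set α := ⨆ k, s k with hαdef
    have hsle : ∀ k, s k ≤ α := fun k => Ordinal.le_iSup s k
    have hαω : α < omega1 := Ordinal_iSup_sequence_lt_omega1 s hsω
    have hlt : ∀ a < α, ∃ k, a < s k := by
      intro a ha
      exact Ordinal.lt_iSup_iff.1 ha
    have hαlim : Order.IsSuccLimit α := by
      rw [Ordinal.isSuccLimit_iff, Order.isSuccPrelimit_iff_succ_lt]
      constructor
      · rw [← pos_iff_ne_zero]
        exact lt_of_le_of_lt (show (0 : Ordinal) ≤ s 0 from zero_le)
          (lt_of_lt_of_le (hsmono 0) (hsle 1))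
      · intro a ha
        obtain ⟨k, hk⟩ := hlt a ha
        have : Order.succ a ≤ s k := Order.succ_le_of_lt hk
        exact lt_of_le_of_lt this (lt_of_lt_of_le (hsmono k) (hsle (k + 1)))
    refine ⟨α, ⟨hαω, hαlim, ?_⟩, le_trans (le_of_eq rfl) (hsle 0)⟩
    intro γ hγ
    obtain ⟨k, hk⟩ := hlt γ hγ
    have h1 : g γ < B (s k) := hB2 γ (s k) hk
    have h2 : B (s k) ≤ s (k + 1) := le_max_right _ _
    exact lt_of_lt_of_le h1 (h2.trans (hsle (k + 1)))
  · -- closure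
    intro α hα hαlim hcofinal
    refine ⟨hα, hαlim, ?_⟩
    intro β hβ
    have hβ1 : β + 1 < α := by
      have := hαlim.succ_lt hβ
      rwa [← Ordinal.add_one_eq_succ] at this
    obtain ⟨γ, hγC, hle, hγα⟩ := hcofinal (β + 1) hβ1
    have hβγ : β < γ := lt_of_lt_of_le (lt_add_one_ordinal β) hle
    exact lt_trans (hγC.2.2 β hβγ) hγα
  · -- the reflection property on club points
    intro α hαC
    obtain ⟨hαω, hαlim, hαg⟩ := hαC
    refine ⟨Set.inter_subset_right, hA.2.1.mono Set.inter_subset_left, ?_⟩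
    intro p hp
    have hδ : (Finset.univ.sup fun i => levelOf (p i)) < α :=
      (Finset.sup_lt_iff hαlim.pos).2 fun i _ => hp i
    set β := (Finset.univ.sup fun i => levelOf (p i)) + 1 with hβdef
    have hβα : β < α := by
      have := hαlim.succ_lt hδ
      rwa [← Ordinal.add_one_eq_succ] at this
    have hβω : β < omega1 := lt_trans hβα hαω
    obtain ⟨a, haA, halev, hacompat⟩ := hg2 β hβω p (fun i => by
      show levelOf (p i) < (Finset.univ.sup fun j => levelOf (p j)) + 1
      exact lt_of_le_of_lt (Finset.le_sup (f := fun j => levelOf (p j)) (Finset.mem_univ i))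
        (lt_add_one_ordinal _))
    refine ⟨a, ⟨haA, fun i => ?_⟩, hacompat⟩
    exact lt_trans (halev i) (hαg β hβα)

end
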